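/- Fix λ* > 0, ε̃ > 0, and λ⁰ > 0. Let λ : [0,∞) → ℝ solve the ODE λ'(t) = 4 λ(t) ( λ*/(√(λ* λ(t) + ε̃²) + ε̃) − λ(t)/(√(λ(t)² + ε̃²) + ε̃) ) with λ(0) = λ⁰. Then for all t ≥ 0, |λ(t) − λ*| ≤ exp(−C t) |λ⁰ − λ*|, where C = 4 ε̃ min(λ*, λ⁰) / ((√(λ* M + ε̃²) + ε̃)(√(M² + ε̃²) + ε̃)) and M = max(λ⁰, λ*). -/

import Mathlib

open Real Set Filter Topology

noncomputable def Fv (lstar ε x : ℝ) : ℝ :=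
  4 * x * (lstar / (Real.sqrt (lstar * x + ε ^ 2) + ε) - x / (Real.sqrt (x ^ 2 + ε ^ 2) + ε))

lemma Fv_id {lstar ε x : ℝ} (hε : 0 < ε) (hl : 0 ≤ lstar) (hx : 0 ≤ x) :
    Fv lstar ε x = 4 * (Real.sqrt (lstar * x + ε ^ 2) - Real.sqrt (x ^ 2 + ε ^ 2)) := by
  have ha : (0:ℝ) ≤ lstar * x + ε ^ 2 := by positivity
  have hb : (0:ℝ) ≤ x ^ 2 + ε ^ 2 := by positivity
  have hA2 : (Real.sqrt (lstar * x + ε ^ 2)) ^ 2 = lstar * x + ε ^ 2 := Real.sq_sqrt ha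
  have hB2 : (Real.sqrt (x ^ 2 + ε ^ 2)) ^ 2 = x ^ 2 + ε ^ 2 := Real.sq_sqrt hb
  have hA0 : 0 ≤ Real.sqrt (lstar * x + ε ^ 2) := Real.sqrt_nonneg _
  have hB0 : 0 ≤ Real.sqrt (x ^ 2 + ε ^ 2) := Real.sqrt_nonneg _
  have h1 : Real.sqrt (lstar * x + ε ^ 2) + ε ≠ 0 := by positivity
  have h2 : Real.sqrt (x ^ 2 + ε ^ 2) + ε ≠ 0 := by positivity
  rw [Fv]
  field_simp
  rw [mul_comm x lstar]
  linear_combination (-(Real.sqrt (x ^ 2 + ε ^ 2) + ε)) * hA2 + (Real.sqrt (lstar * x + ε ^ 2) + ε) * hB2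

lemma Fv_zero (lstar ε : ℝ) : Fv lstar ε 0 = 0 := by simp [Fv]

lemma Fv_star {lstar ε : ℝ} : Fv lstar ε lstar = 0 := by
  have : lstar * lstar = lstar ^ 2 := by ring
  simp [Fv, this]

lemma Fv_pos {lstar ε x : ℝ} (hε : 0 < ε) (h0x : 0 < x) (hxl : x < lstar) :
    0 < Fv lstar ε x := by
  rw [Fv_id hε (by linarith) h0x.le]
  have : x ^ 2 + ε ^ 2 < lstar * x + ε ^ 2 := by nlinarith
  have := Real.sqrt_lt_sqrt (by positivity) this
  linarith

lemma Fv_neg {lstar ε x : ℝ} (hε : 0 < ε) (hl : 0 < lstar) (hx : lstar < x) :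
    Fv lstar ε x < 0 := by
  rw [Fv_id hε hl.le (by linarith)]
  have : lstar * x + ε ^ 2 < x ^ 2 + ε ^ 2 := by nlinarith
  have := Real.sqrt_lt_sqrt (by nlinarith) this
  linarith

section
variable {ε : ℝ}

lemma sqrt_diff_le {a b : ℝ} (hε : 0 < ε) (ha : ε ^ 2 ≤ a) (hb : ε ^ 2 ≤ b) :
    |Real.sqrt a - Real.sqrt b| ≤ |a - b| / (2 * ε) := by
  have ha0 : (0:ℝ) ≤ a := le_trans (by positivity) ha
  have hb0 : (0:ℝ) ≤ b := le_trans (by positivity) hb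
  have hsa : ε ≤ Real.sqrt a := by
    rw [show ε = Real.sqrt (ε ^ 2) by rw [Real.sqrt_sq hε.le]]
    exact Real.sqrt_le_sqrt ha
  have hsb : ε ≤ Real.sqrt b := by
    rw [show ε = Real.sqrt (ε ^ 2) by rw [Real.sqrt_sq hε.le]]
    exact Real.sqrt_le_sqrt hb
  have key : (Real.sqrt a - Real.sqrt b) * (Real.sqrt a + Real.sqrt b) = a - b := by
    have := Real.sq_sqrt ha0
    have := Real.sq_sqrt hb0
    nlinarith
  have habs : |Real.sqrt a - Real.sqrt b| * (Real.sqrt a + Real.sqrt b) = |a - b| := by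
    rw [← key, abs_mul, abs_of_nonneg (show (0:ℝ) ≤ Real.sqrt a + Real.sqrt b by linarith)]
  rw [le_div_iff₀ (by positivity)]
  calc |Real.sqrt a - Real.sqrt b| * (2 * ε)
      ≤ |Real.sqrt a - Real.sqrt b| * (Real.sqrt a + Real.sqrt b) := by
        apply mul_le_mul_of_nonneg_left (by linarith) (abs_nonneg _)
    _ = |a - b| := habs
end

lemma Fv_lip {lstar ε B : ℝ} (hε : 0 < ε) (hl : 0 ≤ lstar) (hB : 0 ≤ B) :
    LipschitzOnWith (Real.toNNReal ((2 * lstar + 4 * B) / ε)) (Fv lstar ε) (Icc 0 B) := by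
  apply LipschitzOnWith.of_dist_le_mul
  intro x hx y hy
  rw [Real.dist_eq, Real.dist_eq]
  rw [Real.coe_toNNReal _ (by positivity)]
  obtain ⟨hx0, hxB⟩ := hx
  obtain ⟨hy0, hyB⟩ := hy
  rw [Fv_id hε hl hx0, Fv_id hε hl hy0]
  have h1 : |Real.sqrt (lstar * x + ε ^ 2) - Real.sqrt (lstar * y + ε ^ 2)|
      ≤ |lstar * x + ε ^ 2 - (lstar * y + ε ^ 2)| / (2 * ε) :=
    sqrt_diff_le hε (by nlinarith) (by nlinarith)
  have h2 : |Real.sqrt (x ^ 2 + ε ^ 2) - Real.sqrt (y ^ 2 + ε ^ 2)|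
      ≤ |x ^ 2 + ε ^ 2 - (y ^ 2 + ε ^ 2)| / (2 * ε) :=
    sqrt_diff_le hε (by nlinarith) (by nlinarith)
  have e1 : |lstar * x + ε ^ 2 - (lstar * y + ε ^ 2)| = lstar * |x - y| := by
    rw [show lstar * x + ε ^ 2 - (lstar * y + ε ^ 2) = lstar * (x - y) by ring, abs_mul,
      abs_of_nonneg hl]
  have e2 : |x ^ 2 + ε ^ 2 - (y ^ 2 + ε ^ 2)| ≤ 2 * B * |x - y| := by
    rw [show x ^ 2 + ε ^ 2 - (y ^ 2 + ε ^ 2) = (x + y) * (x - y) by ring, abs_mul]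
    apply mul_le_mul_of_nonneg_right _ (abs_nonneg _)
    rw [abs_of_nonneg (by linarith)]
    linarith
  have key : |4 * (Real.sqrt (lstar * x + ε ^ 2) - Real.sqrt (x ^ 2 + ε ^ 2))
      - 4 * (Real.sqrt (lstar * y + ε ^ 2) - Real.sqrt (y ^ 2 + ε ^ 2))|
      ≤ 4 * (|Real.sqrt (lstar * x + ε ^ 2) - Real.sqrt (lstar * y + ε ^ 2)|
        + |Real.sqrt (x ^ 2 + ε ^ 2) - Real.sqrt (y ^ 2 + ε ^ 2)|) := by
    have := abs_sub (Real.sqrt (lstar * x + ε ^ 2) - Real.sqrt (lstar * y + ε ^ 2))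
      (Real.sqrt (x ^ 2 + ε ^ 2) - Real.sqrt (y ^ 2 + ε ^ 2))
    calc |4 * (Real.sqrt (lstar * x + ε ^ 2) - Real.sqrt (x ^ 2 + ε ^ 2))
        - 4 * (Real.sqrt (lstar * y + ε ^ 2) - Real.sqrt (y ^ 2 + ε ^ 2))|
        = 4 * |(Real.sqrt (lstar * x + ε ^ 2) - Real.sqrt (lstar * y + ε ^ 2))
            - (Real.sqrt (x ^ 2 + ε ^ 2) - Real.sqrt (y ^ 2 + ε ^ 2))| := by
          rw [show (4:ℝ) * (Real.sqrt (lstar * x + ε ^ 2) - Real.sqrt (x ^ 2 + ε ^ 2))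
            - 4 * (Real.sqrt (lstar * y + ε ^ 2) - Real.sqrt (y ^ 2 + ε ^ 2))
            = 4 * ((Real.sqrt (lstar * x + ε ^ 2) - Real.sqrt (lstar * y + ε ^ 2))
            - (Real.sqrt (x ^ 2 + ε ^ 2) - Real.sqrt (y ^ 2 + ε ^ 2))) by ring, abs_mul]
          norm_num
      _ ≤ _ := by
          have := abs_sub_abs_le_abs_sub (Real.sqrt (lstar * x + ε ^ 2)
            - Real.sqrt (lstar * y + ε ^ 2)) (Real.sqrt (x ^ 2 + ε ^ 2)
            - Real.sqrt (y ^ 2 + ε ^ 2))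
          have h := abs_sub (Real.sqrt (lstar * x + ε ^ 2) - Real.sqrt (lstar * y + ε ^ 2))
            (Real.sqrt (x ^ 2 + ε ^ 2) - Real.sqrt (y ^ 2 + ε ^ 2))
          linarith [h]
  rw [e1] at h1
  have s2 : |Real.sqrt (x ^ 2 + ε ^ 2) - Real.sqrt (y ^ 2 + ε ^ 2)| ≤ 2 * B * |x - y| / (2 * ε) :=
    h2.trans (by gcongr)
  have fin : 4 * (lstar * |x - y| / (2 * ε) + 2 * B * |x - y| / (2 * ε))
      = (2 * lstar + 4 * B) / ε * |x - y| := by field_simp; ring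
  refine key.trans ?_
  rw [← fin]
  have : |Real.sqrt (lstar * x + ε ^ 2) - Real.sqrt (lstar * y + ε ^ 2)|
      + |Real.sqrt (x ^ 2 + ε ^ 2) - Real.sqrt (y ^ 2 + ε ^ 2)|
      ≤ lstar * |x - y| / (2 * ε) + 2 * B * |x - y| / (2 * ε) := add_le_add h1 s2
  linarith

lemma key_core_le {lstar ε m M x A Bq P Q : ℝ} (hε : 0 < ε) (hl : 0 < lstar) (hm : 0 < m)
    (hmx : m ≤ x) (hxM : x ≤ M) (hsx : lstar ≤ x)
    (hA2 : A ^ 2 = lstar * x + ε ^ 2) (hB2 : Bq ^ 2 = x ^ 2 + ε ^ 2)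
    (hA0 : 0 ≤ A) (hB0 : 0 ≤ Bq) (hP0 : 0 ≤ P) (hQ0 : 0 ≤ Q)
    (hAP : A ≤ P) (hBQ : Bq ≤ Q) :
    4 * x * (lstar / (A + ε) - x / (Bq + ε)) ≤
      -(4 * ε * m / ((P + ε) * (Q + ε))) * (x - lstar) := by
  have hx0 : 0 < x := lt_of_lt_of_le hm hmx
  have hAe : 0 < A + ε := by linarith
  have hBe : 0 < Bq + ε := by linarith
  have hPe : 0 < P + ε := by linarith
  have hQe : 0 < Q + ε := by linarith
  have hu : 0 ≤ x - lstar := sub_nonneg.mpr hsx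
  have hsq : (lstar * Bq) ^ 2 ≤ (x * A) ^ 2 := by
    have e1 : (x * A) ^ 2 = x ^ 2 * (lstar * x + ε ^ 2) := by rw [mul_pow, hA2]
    have e2 : (lstar * Bq) ^ 2 = lstar ^ 2 * (x ^ 2 + ε ^ 2) := by rw [mul_pow, hB2]
    rw [e1, e2]
    nlinarith [mul_nonneg (mul_nonneg hl.le (sq_nonneg x)) hu,
      mul_nonneg (mul_nonneg hu (sq_nonneg ε)) (by linarith : (0:ℝ) ≤ x + lstar)]
  have hba : lstar * Bq ≤ x * A :=
    le_of_pow_le_pow_left₀ two_ne_zero (mul_nonneg hx0.le hA0) hsq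
  have hN : lstar * (Bq + ε) - x * (A + ε) ≤ ε * (lstar - x) := by linarith [hba]
  have hDle : (A + ε) * (Bq + ε) ≤ (P + ε) * (Q + ε) := by
    linarith [mul_le_mul hAP hBQ hB0 hP0, mul_le_mul_of_nonneg_left hAP hε.le,
      mul_le_mul_of_nonneg_left hBQ hε.le]
  rw [div_sub_div _ _ (ne_of_gt hAe) (ne_of_gt hBe), mul_div_assoc']
  rw [show -(4 * ε * m / ((P + ε) * (Q + ε))) * (x - lstar)
    = (-(4 * ε * m * (x - lstar))) / ((P + ε) * (Q + ε)) by ring]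
  rw [div_le_div_iff₀ (mul_pos hAe hBe) (mul_pos hPe hQe)]
  have hfac : (0:ℝ) ≤ 4 * x * ((P + ε) * (Q + ε)) :=
    mul_nonneg (by linarith) (mul_pos hPe hQe).le
  have h1 : 4 * x * (lstar * (Bq + ε) - x * (A + ε)) * ((P + ε) * (Q + ε))
      ≤ (4 * x * ((P + ε) * (Q + ε))) * (ε * (lstar - x)) := by
    linarith [mul_le_mul_of_nonneg_left hN hfac]
  have hxD : m * ((A + ε) * (Bq + ε)) ≤ x * ((P + ε) * (Q + ε)) :=
    mul_le_mul hmx hDle (mul_pos hAe hBe).le hx0.le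
  have h2 : (4 * x * ((P + ε) * (Q + ε))) * (ε * (lstar - x))
      ≤ -(4 * ε * m * (x - lstar)) * ((A + ε) * (Bq + ε)) := by
    linarith [mul_le_mul_of_nonneg_left hxD
      (mul_nonneg (mul_nonneg (by norm_num : (0:ℝ) ≤ 4) hε.le) hu)]
  linarith

lemma key_core_ge {lstar ε m M x A Bq P Q : ℝ} (hε : 0 < ε) (hl : 0 < lstar) (hm : 0 < m)
    (hmx : m ≤ x) (hxM : x ≤ M) (hsx : x ≤ lstar)
    (hA2 : A ^ 2 = lstar * x + ε ^ 2) (hB2 : Bq ^ 2 = x ^ 2 + ε ^ 2)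
    (hA0 : 0 ≤ A) (hB0 : 0 ≤ Bq) (hP0 : 0 ≤ P) (hQ0 : 0 ≤ Q)
    (hAP : A ≤ P) (hBQ : Bq ≤ Q) :
    (4 * ε * m / ((P + ε) * (Q + ε))) * (lstar - x) ≤
      4 * x * (lstar / (A + ε) - x / (Bq + ε)) := by
  have hx0 : 0 < x := lt_of_lt_of_le hm hmx
  have hAe : 0 < A + ε := by linarith
  have hBe : 0 < Bq + ε := by linarith
  have hPe : 0 < P + ε := by linarith
  have hQe : 0 < Q + ε := by linarith
  have hu : 0 ≤ lstar - x := sub_nonneg.mpr hsx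
  have hsq : (x * A) ^ 2 ≤ (lstar * Bq) ^ 2 := by
    have e1 : (x * A) ^ 2 = x ^ 2 * (lstar * x + ε ^ 2) := by rw [mul_pow, hA2]
    have e2 : (lstar * Bq) ^ 2 = lstar ^ 2 * (x ^ 2 + ε ^ 2) := by rw [mul_pow, hB2]
    rw [e1, e2]
    nlinarith [mul_nonneg (mul_nonneg hl.le (sq_nonneg x)) hu,
      mul_nonneg (mul_nonneg hu (sq_nonneg ε)) (by linarith : (0:ℝ) ≤ x + lstar)]
  have hba : x * A ≤ lstar * Bq :=
    le_of_pow_le_pow_left₀ two_ne_zero (mul_nonneg hl.le hB0) hsq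
  have hN : ε * (lstar - x) ≤ lstar * (Bq + ε) - x * (A + ε) := by linarith [hba]
  have hDle : (A + ε) * (Bq + ε) ≤ (P + ε) * (Q + ε) := by
    linarith [mul_le_mul hAP hBQ hB0 hP0, mul_le_mul_of_nonneg_left hAP hε.le,
      mul_le_mul_of_nonneg_left hBQ hε.le]
  rw [div_sub_div _ _ (ne_of_gt hAe) (ne_of_gt hBe), mul_div_assoc']
  rw [show (4 * ε * m / ((P + ε) * (Q + ε))) * (lstar - x)
    = (4 * ε * m * (lstar - x)) / ((P + ε) * (Q + ε)) by ring]
  rw [div_le_div_iff₀ (mul_pos hPe hQe) (mul_pos hAe hBe)]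
  have hfac : (0:ℝ) ≤ 4 * x * ((P + ε) * (Q + ε)) :=
    mul_nonneg (by linarith) (mul_pos hPe hQe).le
  have hxD : m * ((A + ε) * (Bq + ε)) ≤ x * ((P + ε) * (Q + ε)) :=
    mul_le_mul hmx hDle (mul_pos hAe hBe).le hx0.le
  have h2 : 4 * ε * m * (lstar - x) * ((A + ε) * (Bq + ε))
      ≤ (4 * x * ((P + ε) * (Q + ε))) * (ε * (lstar - x)) := by
    linarith [mul_le_mul_of_nonneg_left hxD
      (mul_nonneg (mul_nonneg (by norm_num : (0:ℝ) ≤ 4) hε.le) hu)]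
  have h1 : (4 * x * ((P + ε) * (Q + ε))) * (ε * (lstar - x))
      ≤ 4 * x * (lstar * (Bq + ε) - x * (A + ε)) * ((P + ε) * (Q + ε)) := by
    linarith [mul_le_mul_of_nonneg_left hN hfac]
  linarith

lemma key_le {lstar ε m M x : ℝ} (hε : 0 < ε) (hl : 0 < lstar) (hm : 0 < m)
    (hmx : m ≤ x) (hxM : x ≤ M) (hsx : lstar ≤ x) :
    Fv lstar ε x ≤ -(4 * ε * m / ((Real.sqrt (lstar * M + ε ^ 2) + ε)
      * (Real.sqrt (M ^ 2 + ε ^ 2) + ε))) * (x - lstar) := by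
  have hx0 : 0 < x := lt_of_lt_of_le hm hmx
  have hM0 : 0 < M := lt_of_lt_of_le hx0 hxM
  exact key_core_le hε hl hm hmx hxM hsx
    (Real.sq_sqrt (by nlinarith [mul_pos hl hx0])) (Real.sq_sqrt (by positivity))
    (Real.sqrt_nonneg _) (Real.sqrt_nonneg _) (Real.sqrt_nonneg _) (Real.sqrt_nonneg _)
    (Real.sqrt_le_sqrt (by nlinarith)) (Real.sqrt_le_sqrt (by nlinarith))

lemma key_ge {lstar ε m M x : ℝ} (hε : 0 < ε) (hl : 0 < lstar) (hm : 0 < m)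
    (hmx : m ≤ x) (hxM : x ≤ M) (hsx : x ≤ lstar) :
    (4 * ε * m / ((Real.sqrt (lstar * M + ε ^ 2) + ε)
      * (Real.sqrt (M ^ 2 + ε ^ 2) + ε))) * (lstar - x) ≤ Fv lstar ε x := by
  have hx0 : 0 < x := lt_of_lt_of_le hm hmx
  have hM0 : 0 < M := lt_of_lt_of_le hx0 hxM
  exact key_core_ge hε hl hm hmx hxM hsx
    (Real.sq_sqrt (by nlinarith [mul_pos hl hx0])) (Real.sq_sqrt (by positivity))
    (Real.sqrt_nonneg _) (Real.sqrt_nonneg _) (Real.sqrt_nonneg _) (Real.sqrt_nonneg _)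
    (Real.sqrt_le_sqrt (by nlinarith)) (Real.sqrt_le_sqrt (by nlinarith))

lemma helper_le {f φ : ℝ → ℝ} {c : ℝ}
    (hd : ∀ t ≥ (0:ℝ), HasDerivAt f (φ (f t)) t) (h0 : f 0 ≤ c) (hφ : φ c < 0) :
    ∀ s ≥ (0:ℝ), f s ≤ c := by
  intro s hs
  by_contra hc
  push_neg at hc
  have hs0 : 0 < s := by
    rcases eq_or_lt_of_le hs with h | h
    · exact absurd (h ▸ hc) (not_lt.mpr h0)
    · exact h
  set S := {t ∈ Icc 0 s | c < f t} with hS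
  have hsS : s ∈ S := ⟨⟨hs, le_refl s⟩, hc⟩
  have hSne : S.Nonempty := ⟨s, hsS⟩
  have hSbd : BddBelow S := ⟨0, fun t ht => ht.1.1⟩
  set τ := sInf S with hτ
  have hτ0 : 0 ≤ τ := le_csInf hSne fun t ht => ht.1.1
  have hτs : τ ≤ s := csInf_le hSbd hsS
  have hcont : ContinuousAt f τ := (hd τ hτ0).continuousAt
  have Hge : c ≤ f τ := by
    by_contra h
    push_neg at h
    have hev : ∀ᶠ x in 𝓝 τ, f x < c := hcont.eventually_lt continuousAt_const h
    rcases Metric.eventually_nhds_iff.mp hev with ⟨δ, hδ, hball⟩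
    obtain ⟨t, htS, htlt⟩ := exists_lt_of_csInf_lt hSne (show sInf S < τ + δ by linarith)
    have h1 : τ ≤ t := csInf_le hSbd htS
    have h2 : f t < c := hball (show dist t τ < δ by
      rw [Real.dist_eq, abs_lt]; constructor <;> linarith)
    exact absurd htS.2 (not_lt.mpr h2.le)
  have Hle : f τ ≤ c := by
    by_contra h
    push_neg at h
    have hτpos : 0 < τ := by
      rcases eq_or_lt_of_le hτ0 with h' | h'
      · exact absurd (h' ▸ h) (not_lt.mpr h0)
      · exact h'
    have hev : ∀ᶠ x in 𝓝 τ, c < f x := continuousAt_const.eventually_lt hcont h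
    rcases Metric.eventually_nhds_iff.mp hev with ⟨δ, hδ, hball⟩
    set t' := τ - min δ τ / 2 with ht'
    have hmin : 0 < min δ τ := lt_min hδ hτpos
    have h1 : 0 ≤ t' := by
      have : min δ τ ≤ τ := min_le_right _ _
      simp only [ht']; linarith
    have h2 : t' < τ := by simp only [ht']; linarith
    have h3 : dist t' τ < δ := by
      rw [Real.dist_eq, abs_lt]
      have : min δ τ ≤ δ := min_le_left _ _
      constructor <;> simp only [ht'] <;> linarith
    have h4 : t' ∈ S := ⟨⟨h1, by linarith⟩, hball h3⟩
    exact absurd (csInf_le hSbd h4) (not_le.mpr h2)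
  have hfτ : f τ = c := le_antisymm Hle Hge
  have hτnS : τ ∉ S := fun h => absurd h.2 (not_lt.mpr Hle)
  -- slope argument
  have hD : HasDerivAt f (φ c) τ := hfτ ▸ hd τ hτ0
  have hslope : Tendsto (slope f τ) (𝓝[>] τ) (𝓝 (φ c)) :=
    ((hasDerivAt_iff_tendsto_slope.mp hD).mono_left
      (nhdsWithin_mono τ fun x hx => ne_of_gt hx))
  have hev : ∀ᶠ x in 𝓝[>] τ, slope f τ x < 0 := hslope.eventually (Iio_mem_nhds hφ)
  rcases mem_nhdsGT_iff_exists_Ioo_subset.mp hev with ⟨u, hu, hsub⟩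
  have huτ : τ < u := hu
  obtain ⟨t, htS, htlt⟩ := exists_lt_of_csInf_lt hSne
    (show sInf S < min u s by
      rw [lt_min_iff]
      refine ⟨huτ, lt_of_le_of_ne hτs fun h => hτnS ?_⟩
      rw [hτ, h]; exact hsS)
  have hτt : τ ≤ t := csInf_le hSbd htS
  have hτt' : τ < t := lt_of_le_of_ne hτt (fun h => hτnS (h ▸ htS))
  have htIoo : t ∈ Ioo τ u := ⟨hτt', lt_of_lt_of_le htlt (min_le_left _ _)⟩
  have hsl : slope f τ t < 0 := hsub htIoo
  rw [slope_def_field] at hsl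
  have : f t - f τ < 0 := by
    have hpos : 0 < t - τ := by linarith
    by_contra hge
    push_neg at hge
    have : 0 ≤ (f t - f τ) / (t - τ) := div_nonneg hge hpos.le
    linarith
  rw [hfτ] at this
  exact absurd htS.2 (not_lt.mpr (by linarith))

lemma helper_ge {f φ : ℝ → ℝ} {c : ℝ}
    (hd : ∀ t ≥ (0:ℝ), HasDerivAt f (φ (f t)) t) (h0 : c ≤ f 0) (hφ : 0 < φ c) :
    ∀ s ≥ (0:ℝ), c ≤ f s := by
  set g : ℝ → ℝ := fun u => -f u with hg
  set ψ : ℝ → ℝ := fun y => -φ (-y) with hψ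
  have hd' : ∀ t ≥ (0:ℝ), HasDerivAt g (ψ (g t)) t := by
    intro t ht
    have : ψ (g t) = -φ (f t) := by simp [hg, hψ]
    rw [this]
    exact (hd t ht).neg
  have h0' : g 0 ≤ -c := by simp [hg]; linarith
  have hφ' : ψ (-c) < 0 := by simp [hψ]; linarith
  intro s hs
  have := helper_le hd' h0' hφ' s hs
  simp [hg] at this
  linarith

section
variable {lstar ε : ℝ} {l : ℝ → ℝ} {s : ℝ}

lemma star_forward (hε : 0 < ε) (hl : 0 < lstar) (hs : 0 ≤ s)
    (hode : ∀ t ≥ (0:ℝ), HasDerivAt l (Fv lstar ε (l t)) t)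
    (hpos : ∀ t, 0 ≤ t → 0 ≤ l t) (h0 : l 0 = lstar) : l s = lstar := by
  have hcl : ContinuousOn l (Icc 0 s) := fun u hu =>
    ((hode u hu.1).continuousAt).continuousWithinAt
  obtain ⟨Bb, hBb⟩ := (isCompact_Icc (a := (0:ℝ)) (b := s)).exists_bound_of_continuousOn hcl
  set B := max Bb lstar with hB
  have hB0 : 0 ≤ B := le_trans hl.le (le_max_right _ _)
  have hmem : ∀ t ∈ Icc 0 s, l t ∈ Icc 0 B := fun t ht =>
    ⟨hpos t ht.1, le_trans (le_trans (le_abs_self _) (by rw [← Real.norm_eq_abs]; exact hBb t ht))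
      (le_max_left _ _)⟩
  have hstar_mem : lstar ∈ Icc (0:ℝ) B := ⟨hl.le, le_max_right _ _⟩
  have key := ODE_solution_unique_of_mem_Icc_right
    (v := fun _ x => Fv lstar ε x) (s := fun _ => Icc 0 B)
    (K := Real.toNNReal ((2 * lstar + 4 * B) / ε))
    (fun _ _ => Fv_lip hε hl.le hB0)
    hcl
    (fun t ht => (hode t ht.1).hasDerivWithinAt)
    (fun t ht => hmem t (Ico_subset_Icc_self ht))
    (continuousOn_const (c := lstar))
    (fun t _ => by rw [show Fv lstar ε lstar = 0 from Fv_star]; exact (hasDerivWithinAt_const t _ lstar))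
    (fun t _ => hstar_mem)
    h0
  exact key ⟨hs, le_refl s⟩

lemma star_backward (hε : 0 < ε) (hl : 0 < lstar) (hs : 0 ≤ s)
    (hode : ∀ t ≥ (0:ℝ), HasDerivAt l (Fv lstar ε (l t)) t)
    (hpos : ∀ t, 0 ≤ t → 0 ≤ l t) (hb : l s = lstar) : l 0 = lstar := by
  have hcl : ContinuousOn l (Icc 0 s) := fun u hu =>
    ((hode u hu.1).continuousAt).continuousWithinAt
  obtain ⟨Bb, hBb⟩ := (isCompact_Icc (a := (0:ℝ)) (b := s)).exists_bound_of_continuousOn hcl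
  set B := max Bb lstar with hB
  have hB0 : 0 ≤ B := le_trans hl.le (le_max_right _ _)
  have hmem : ∀ t ∈ Icc 0 s, l t ∈ Icc 0 B := fun t ht =>
    ⟨hpos t ht.1, le_trans (le_trans (le_abs_self _) (by rw [← Real.norm_eq_abs]; exact hBb t ht))
      (le_max_left _ _)⟩
  have hstar_mem : lstar ∈ Icc (0:ℝ) B := ⟨hl.le, le_max_right _ _⟩
  have key := ODE_solution_unique_of_mem_Icc_left
    (v := fun _ x => Fv lstar ε x) (s := fun _ => Icc 0 B)
    (K := Real.toNNReal ((2 * lstar + 4 * B) / ε))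
    (fun _ _ => Fv_lip hε hl.le hB0)
    hcl
    (fun t ht => (hode t ht.1.le).hasDerivWithinAt)
    (fun t ht => hmem t (Ioc_subset_Icc_self ht))
    (continuousOn_const (c := lstar))
    (fun t _ => by rw [show Fv lstar ε lstar = 0 from Fv_star]; exact (hasDerivWithinAt_const t _ lstar))
    (fun t _ => hstar_mem)
    hb
  exact key ⟨le_refl 0, hs⟩
end


/-- exponential convergence rate for the eigenvalue ODE with λ* > 0. -/
theorem stmt8 (lstar ε l0 : ℝ) (hlstar : 0 < lstar) (hε : 0 < ε) (hl0 : 0 < l0)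
    (l : ℝ → ℝ)
    (hode : ∀ t ≥ (0 : ℝ), HasDerivAt l
      (4 * l t * (lstar / (Real.sqrt (lstar * l t + ε ^ 2) + ε)
        - l t / (Real.sqrt ((l t) ^ 2 + ε ^ 2) + ε))) t)
    (hinit : l 0 = l0) :
    ∀ t ≥ (0 : ℝ),
      |l t - lstar| ≤
        Real.exp (-(4 * ε * min lstar l0 /
          ((Real.sqrt (lstar * max l0 lstar + ε ^ 2) + ε) *
            (Real.sqrt ((max l0 lstar) ^ 2 + ε ^ 2) + ε))) * t) * |l0 - lstar| := by
  have hode' : ∀ u ≥ (0:ℝ), HasDerivAt l (Fv lstar ε (l u)) u := hode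
  -- global lower bound
  have hc0 : 0 < min l0 (lstar / 2) := lt_min hl0 (by linarith)
  have hclt : min l0 (lstar / 2) < lstar := lt_of_le_of_lt (min_le_right _ _) (by linarith)
  have hlow : ∀ u ≥ (0:ℝ), min l0 (lstar / 2) ≤ l u :=
    helper_ge hode' (by rw [hinit]; exact min_le_left _ _) (Fv_pos hε hc0 hclt)
  have hpos : ∀ u, 0 ≤ u → 0 ≤ l u := fun u hu => le_trans hc0.le (hlow u hu)
  have hcl : ∀ s : ℝ, ContinuousOn l (Icc 0 s) := fun s u hu =>
    ((hode' u hu.1).continuousAt).continuousWithinAt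
  intro t ht
  rcases lt_trichotomy l0 lstar with hcase | hcase | hcase
  · -- l0 < lstar
    rw [min_eq_right hcase.le, max_eq_right hcase.le]
    set Cc := 4 * ε * l0 / ((Real.sqrt (lstar * lstar + ε ^ 2) + ε) *
      (Real.sqrt (lstar ^ 2 + ε ^ 2) + ε)) with hCc
    have hne : ∀ u ≥ (0:ℝ), l u ≠ lstar := by
      intro u hu heq
      have := star_backward hε hlstar hu hode' hpos heq
      rw [hinit] at this
      exact absurd this (ne_of_lt hcase)
    have hub : ∀ u ≥ (0:ℝ), l u ≤ lstar := by
      intro u hu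
      by_contra hgt
      push_neg at hgt
      have hsub := intermediate_value_Icc hu (hcl u)
      have : lstar ∈ Icc (l 0) (l u) := ⟨by rw [hinit]; linarith, hgt.le⟩
      obtain ⟨w, hw, hlw⟩ := hsub this
      exact hne w hw.1 hlw
    have hlb : ∀ u ≥ (0:ℝ), l0 ≤ l u :=
      helper_ge hode' (le_of_eq hinit.symm) (Fv_pos hε hl0 hcase)
    -- antitone function
    set h : ℝ → ℝ := fun u => (lstar - l u) * Real.exp (Cc * u) with hh
    have hder : ∀ u ≥ (0:ℝ), HasDerivAt h
        (-(Fv lstar ε (l u)) * Real.exp (Cc * u) + (lstar - l u) * (Real.exp (Cc * u) * (Cc * 1))) u :=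
      fun u hu => ((hode' u hu).const_sub lstar).mul (((hasDerivAt_id u).const_mul Cc).exp)
    have hanti : AntitoneOn h (Icc 0 t) := by
      apply antitoneOn_of_deriv_nonpos (convex_Icc 0 t)
      · exact (continuousOn_const.sub (hcl t)).mul (Real.continuous_exp.comp
          (continuous_const.mul continuous_id)).continuousOn
      · intro u hu
        rw [interior_Icc] at hu
        exact (hder u hu.1.le).differentiableAt.differentiableWithinAt
      · intro u hu
        rw [interior_Icc] at hu
        rw [(hder u hu.1.le).deriv]
        have hk := key_ge (M := lstar) hε hlstar hl0 (hlb u hu.1.le)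
          (hub u hu.1.le) (hub u hu.1.le)
        have hE : 0 < Real.exp (Cc * u) := Real.exp_pos _
        rw [← hCc] at hk
        nlinarith [mul_le_mul_of_nonneg_right hk hE.le]
    have key2 : (lstar - l t) * Real.exp (Cc * t) ≤ lstar - l0 := by
      have := hanti (left_mem_Icc.mpr ht) ⟨ht, le_refl t⟩ ht
      simpa [hh, hinit] using this
    have habs1 : |l t - lstar| = lstar - l t := by
      rw [abs_sub_comm, abs_of_nonneg (by linarith [hub t ht])]
    have habs2 : |l0 - lstar| = lstar - l0 := by
      rw [abs_sub_comm, abs_of_nonneg (by linarith)]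
    rw [habs1, habs2, show -Cc * t = -(Cc * t) by ring, Real.exp_neg, inv_mul_eq_div, le_div_iff₀ (Real.exp_pos _)]
    exact key2
  · -- l0 = lstar
    have : l t = lstar := star_forward hε hlstar ht hode' hpos (by rw [hinit, hcase])
    rw [this, hcase]
    simp
  · -- lstar < l0
    rw [min_eq_left hcase.le, max_eq_left hcase.le]
    set Cc := 4 * ε * lstar / ((Real.sqrt (lstar * l0 + ε ^ 2) + ε) *
      (Real.sqrt (l0 ^ 2 + ε ^ 2) + ε)) with hCc
    have hne : ∀ u ≥ (0:ℝ), l u ≠ lstar := by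
      intro u hu heq
      have := star_backward hε hlstar hu hode' hpos heq
      rw [hinit] at this
      exact absurd this (ne_of_gt hcase)
    have hlb : ∀ u ≥ (0:ℝ), lstar ≤ l u := by
      intro u hu
      by_contra hgt
      push_neg at hgt
      have hsub := intermediate_value_Icc' hu (hcl u)
      have : lstar ∈ Icc (l u) (l 0) := ⟨hgt.le, by rw [hinit]; linarith⟩
      obtain ⟨w, hw, hlw⟩ := hsub this
      exact hne w hw.1 hlw
    have hub : ∀ u ≥ (0:ℝ), l u ≤ l0 :=
      helper_le hode' (le_of_eq hinit) (Fv_neg hε hlstar hcase)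
    set h : ℝ → ℝ := fun u => (l u - lstar) * Real.exp (Cc * u) with hh
    have hder : ∀ u ≥ (0:ℝ), HasDerivAt h
        ((Fv lstar ε (l u)) * Real.exp (Cc * u) + (l u - lstar) * (Real.exp (Cc * u) * (Cc * 1))) u :=
      fun u hu => ((hode' u hu).sub_const lstar).mul (((hasDerivAt_id u).const_mul Cc).exp)
    have hanti : AntitoneOn h (Icc 0 t) := by
      apply antitoneOn_of_deriv_nonpos (convex_Icc 0 t)
      · exact ((hcl t).sub continuousOn_const).mul (Real.continuous_exp.comp
          (continuous_const.mul continuous_id)).continuousOn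
      · intro u hu
        rw [interior_Icc] at hu
        exact (hder u hu.1.le).differentiableAt.differentiableWithinAt
      · intro u hu
        rw [interior_Icc] at hu
        rw [(hder u hu.1.le).deriv]
        have hk := key_le (M := l0) hε hlstar hlstar (hlb u hu.1.le)
          (hub u hu.1.le) (hlb u hu.1.le)
        have hE : 0 < Real.exp (Cc * u) := Real.exp_pos _
        rw [← hCc] at hk
        nlinarith [mul_le_mul_of_nonneg_right hk hE.le]
    have key2 : (l t - lstar) * Real.exp (Cc * t) ≤ l0 - lstar := by
      have := hanti (left_mem_Icc.mpr ht) ⟨ht, le_refl t⟩ ht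
      simpa [hh, hinit] using this
    have habs1 : |l t - lstar| = l t - lstar := abs_of_nonneg (by linarith [hlb t ht])
    have habs2 : |l0 - lstar| = l0 - lstar := abs_of_nonneg (by linarith)
    rw [habs1, habs2, show -Cc * t = -(Cc * t) by ring, Real.exp_neg, inv_mul_eq_div, le_div_iff₀ (Real.exp_pos _)]
    exact key2
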